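/- The relative semiordinal sum ⊕, induced on fat Delta by applying the ordinal sum to domains and codomains of epimorphisms, equips the augmented fat Delta category (epimorphisms in augmented Δ, including the empty ordinal) with a strict monoidal structure whose unit is the empty epimorphism. -/

import Mathlib

open CategoryTheory

/-- The augmented fat Delta category: objects are the epimorphisms of the augmented
simplex category (surjective monotone maps between finite, possibly empty, linear
orders), and morphisms are commutative squares with an injective monotone map on top. -/
structure AugFatDelta : Type where
  m : ℕ
  n : ℕ
  hom : Fin m →o Fin n
  surj : Function.Surjective hom

namespace AugFatDelta

structure Hom (A B : AugFatDelta) : Type where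
  top : Fin A.m →o Fin B.m
  bot : Fin A.n →o Fin B.n
  inj : Function.Injective top
  comm : ∀ x, B.hom (top x) = bot (A.hom x)

theorem Hom.ext' {A B : AugFatDelta} {f g : Hom A B} (h1 : f.top = g.top)
    (h2 : f.bot = g.bot) : f = g := by
  cases f; cases g; simp_all

instance : Category AugFatDelta where
  Hom := Hom
  id A := ⟨OrderHom.id, OrderHom.id, fun _ _ h => h, fun _ => rfl⟩
  comp f g := ⟨g.top.comp f.top, g.bot.comp f.bot, g.inj.comp f.inj,
    fun x => by simp [OrderHom.comp, f.comm, g.comm]⟩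
  id_comp f := Hom.ext' rfl rfl
  comp_id f := Hom.ext' rfl rfl
  assoc f g h := Hom.ext' rfl rfl

/-- The relative semiordinal sum of two objects of augmented fat Delta, given by the
ordinal sum (join) on domains and codomains. -/
def sumObj (A B : AugFatDelta) : AugFatDelta where
  m := A.m + B.m
  n := A.n + B.n
  hom :=
    { toFun := fun x =>
        if h : (x : ℕ) < A.m then Fin.castAdd B.n (A.hom ⟨x, h⟩)
        else Fin.natAdd A.n (B.hom ⟨(x : ℕ) - A.m, by omega⟩)
      monotone' := by
        intro a b hab
        by_cases h1 : (a : ℕ) < A.m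
        · by_cases h2 : (b : ℕ) < A.m
          · simp only [h1, h2, dif_pos]
            have : A.hom ⟨a, h1⟩ ≤ A.hom ⟨b, h2⟩ := A.hom.monotone (by
              simp only [Fin.mk_le_mk]
              exact hab)
            simp only [Fin.le_def, Fin.coe_castAdd]
            exact this
          · simp only [h1, h2, dif_pos, dif_neg, not_false_iff]
            have := (A.hom ⟨a, h1⟩).isLt
            simp only [Fin.le_def, Fin.coe_castAdd, Fin.coe_natAdd]
            omega
        · have h2 : ¬ (b : ℕ) < A.m := by have : (a : ℕ) ≤ b := hab; omega
          simp only [h1, h2, dif_neg, not_false_iff]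
          have : B.hom ⟨(a : ℕ) - A.m, by omega⟩ ≤ B.hom ⟨(b : ℕ) - A.m, by omega⟩ := by
            apply B.hom.monotone
            have : (a : ℕ) ≤ b := hab
            simp only [Fin.mk_le_mk]
            omega
          simp only [Fin.le_def, Fin.coe_natAdd]
          omega }
  surj := by
    intro y
    by_cases h : (y : ℕ) < A.n
    · obtain ⟨x, hx⟩ := A.surj ⟨y, h⟩
      refine ⟨Fin.castAdd B.m x, ?_⟩
      have hx' : ((Fin.castAdd B.m x : Fin (A.m + B.m)) : ℕ) < A.m := x.isLt
      erw [OrderHom.coe_mk]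
      simp only [OrderHom.coe_mk, hx', dif_pos]
      apply Fin.ext
      simp only [Fin.coe_castAdd, Fin.eta, hx]
    · obtain ⟨x, hx⟩ := B.surj ⟨(y : ℕ) - A.n, by omega⟩
      refine ⟨Fin.natAdd A.m x, ?_⟩
      have hx' : ¬ ((Fin.natAdd A.m x : Fin (A.m + B.m)) : ℕ) < A.m := by
        simp only [Fin.coe_natAdd]; omega
      erw [OrderHom.coe_mk]
      simp only [OrderHom.coe_mk, hx', dif_neg, not_false_iff]
      apply Fin.ext
      simp only [Fin.coe_natAdd]
      have h2 : A.m + (x : ℕ) - A.m = (x : ℕ) := by omega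
      simp only [h2, Fin.eta, hx]
      omega

/-- The empty epimorphism, the unit of the relative semiordinal sum. -/
def emptyObj : AugFatDelta where
  m := 0
  n := 0
  hom := OrderHom.id
  surj := fun y => y.elim0

/-- Join of two order homs between `Fin`s. -/
def joinO {a b c d : ℕ} (f : Fin a →o Fin c) (g : Fin b →o Fin d) :
    Fin (a + b) →o Fin (c + d) where
  toFun x := if h : (x : ℕ) < a then Fin.castAdd d (f ⟨x, h⟩)
    else Fin.natAdd c (g ⟨(x : ℕ) - a, by omega⟩)
  monotone' := by
    intro x y hxy
    have hxy' : (x : ℕ) ≤ y := hxy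
    by_cases h1 : (x : ℕ) < a
    · by_cases h2 : (y : ℕ) < a
      · simp only [dif_pos h1, dif_pos h2, Fin.le_def, Fin.coe_castAdd]
        exact f.monotone (show ((⟨x, h1⟩ : Fin a)) ≤ ⟨y, h2⟩ from hxy')
      · have := (f ⟨x, h1⟩).isLt
        simp only [dif_pos h1, dif_neg h2, Fin.le_def, Fin.coe_castAdd, Fin.coe_natAdd]
        omega
    · have h2 : ¬ (y : ℕ) < a := by omega
      simp only [dif_neg h1, dif_neg h2, Fin.le_def, Fin.coe_natAdd]
      have : g ⟨(x : ℕ) - a, by omega⟩ ≤ g ⟨(y : ℕ) - a, by omega⟩ :=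
        g.monotone (by simp only [Fin.mk_le_mk]; omega)
      omega

lemma joinO_val {a b c d : ℕ} (f : Fin a →o Fin c) (g : Fin b →o Fin d)
    (x : Fin (a + b)) (k : ℕ) (hk : (x : ℕ) = k) (hkab : k < a + b) :
    ((joinO f g x : Fin (c + d)) : ℕ) =
      if h : k < a then (f ⟨k, h⟩ : ℕ) else c + (g ⟨k - a, by omega⟩ : ℕ) := by
  subst hk
  simp only [joinO, OrderHom.coe_mk]
  erw [OrderHom.coe_mk]
  split <;> simp

lemma oh_congr_val {n m : ℕ} (f : Fin n →o Fin m) {x y : Fin n}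
    (h : (x : ℕ) = (y : ℕ)) : ((f x : Fin m) : ℕ) = f y := by
  rw [Fin.ext h]

lemma joinO_val_lt {a b c d : ℕ} (f : Fin a →o Fin c) (g : Fin b →o Fin d)
    (x : Fin (a + b)) {k : ℕ} (hk : (x : ℕ) = k) (h : k < a) :
    ((joinO f g x : Fin (c + d)) : ℕ) = ((f ⟨k, h⟩ : Fin c) : ℕ) := by
  subst hk
  simp only [joinO, OrderHom.coe_mk, dif_pos h, Fin.coe_castAdd]
  erw [OrderHom.coe_mk]
  simp only [dif_pos h, Fin.coe_castAdd]

lemma joinO_val_ge {a b c d : ℕ} (f : Fin a →o Fin c) (g : Fin b →o Fin d)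
    (x : Fin (a + b)) {k : ℕ} (hk : (x : ℕ) = k) (h : ¬ k < a) (hb : k - a < b) :
    ((joinO f g x : Fin (c + d)) : ℕ) = c + ((g ⟨k - a, hb⟩ : Fin d) : ℕ) := by
  subst hk
  simp only [joinO, OrderHom.coe_mk, dif_neg h, Fin.coe_natAdd]
  erw [OrderHom.coe_mk]
  simp only [dif_neg h, Fin.coe_natAdd]

lemma sumObj_hom_val (A B : AugFatDelta) (x : Fin (A.m + B.m)) (k : ℕ)
    (hk : (x : ℕ) = k) (hkab : k < A.m + B.m) :
    (((sumObj A B).hom x : Fin (A.n + B.n)) : ℕ) =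
      if h : k < A.m then (A.hom ⟨k, h⟩ : ℕ) else A.n + (B.hom ⟨k - A.m, by omega⟩ : ℕ) := by
  subst hk
  simp only [sumObj, OrderHom.coe_mk]
  erw [OrderHom.coe_mk]
  split <;> simp

lemma joinO_injective {a b c d : ℕ} {f : Fin a →o Fin c} {g : Fin b →o Fin d}
    (hf : Function.Injective f) (hg : Function.Injective g) :
    Function.Injective (joinO f g) := by
  intro x y hxy
  have h := congrArg Fin.val hxy
  rw [joinO_val f g x x rfl x.isLt, joinO_val f g y y rfl y.isLt] at h
  apply Fin.ext
  by_cases h1 : (x : ℕ) < a <;> by_cases h2 : (y : ℕ) < a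
  · simp only [dif_pos h1, dif_pos h2] at h
    have h3 := congrArg Fin.val (hf (Fin.ext h : f ⟨x, h1⟩ = f ⟨y, h2⟩))
    simpa using h3
  · have := (f ⟨x, h1⟩).isLt
    simp only [dif_pos h1, dif_neg h2] at h; omega
  · have := (f ⟨y, h2⟩).isLt
    simp only [dif_neg h1, dif_pos h2] at h; omega
  · simp only [dif_neg h1, dif_neg h2] at h
    have h' : g ⟨(x : ℕ) - a, by omega⟩ = g ⟨(y : ℕ) - a, by omega⟩ := Fin.ext (by omega)
    have := congrArg Fin.val (hg h')
    simp only [Fin.val_mk] at this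
    omega

set_option maxHeartbeats 1000000 in
lemma joinO_comm_val {A B X Y : AugFatDelta} (f : A ⟶ B) (g : X ⟶ Y)
    (x : Fin (A.m + X.m)) :
    ((joinO B.hom Y.hom (joinO f.top g.top x) : Fin (B.n + Y.n)) : ℕ) =
      ((joinO f.bot g.bot (joinO A.hom X.hom x) : Fin (B.n + Y.n)) : ℕ) := by
  have hx := x.isLt
  by_cases h1 : (x : ℕ) < A.m
  · have e1 : ((joinO f.top g.top x : Fin (B.m + Y.m)) : ℕ) = (f.top ⟨x, h1⟩ : ℕ) :=
      joinO_val_lt _ _ x rfl h1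
    have e2 : ((joinO A.hom X.hom x : Fin (A.n + X.n)) : ℕ) = (A.hom ⟨x, h1⟩ : ℕ) :=
      joinO_val_lt _ _ x rfl h1
    rw [joinO_val_lt B.hom Y.hom (joinO f.top g.top x) e1 (f.top ⟨x, h1⟩).isLt]
    rw [joinO_val_lt f.bot g.bot (joinO A.hom X.hom x) e2 (A.hom ⟨x, h1⟩).isLt]
    simp only [Fin.eta]
    exact congrArg Fin.val (f.comm ⟨x, h1⟩)
  · have e1 : ((joinO f.top g.top x : Fin (B.m + Y.m)) : ℕ) =
        B.m + (g.top ⟨(x : ℕ) - A.m, by omega⟩ : ℕ) :=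
      joinO_val_ge _ _ x rfl h1 (by omega)
    have e2 : ((joinO A.hom X.hom x : Fin (A.n + X.n)) : ℕ) =
        A.n + (X.hom ⟨(x : ℕ) - A.m, by omega⟩ : ℕ) :=
      joinO_val_ge _ _ x rfl h1 (by omega)
    have hb1 : B.m + ((g.top ⟨(x : ℕ) - A.m, by omega⟩ : Fin Y.m) : ℕ) - B.m < Y.m := by
      have := (g.top ⟨(x : ℕ) - A.m, by omega⟩ : Fin Y.m).isLt
      omega
    have hb2 : A.n + ((X.hom ⟨(x : ℕ) - A.m, by omega⟩ : Fin X.n) : ℕ) - A.n < X.n := by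
      have := (X.hom ⟨(x : ℕ) - A.m, by omega⟩ : Fin X.n).isLt
      omega
    rw [joinO_val_ge B.hom Y.hom (joinO f.top g.top x) e1 (by omega) hb1]
    rw [joinO_val_ge f.bot g.bot (joinO A.hom X.hom x) e2 (by omega) hb2]
    simp only [Nat.add_sub_cancel_left, Fin.eta]
    exact congrArg (fun t : Fin Y.n => B.n + (t : ℕ)) (g.comm ⟨(x : ℕ) - A.m, by omega⟩)

/-- The sum of two morphisms of augmented fat Delta. -/
def sumHom {A B X Y : AugFatDelta} (f : A ⟶ B) (g : X ⟶ Y) :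
    sumObj A X ⟶ sumObj B Y where
  top := joinO f.top g.top
  bot := joinO f.bot g.bot
  inj := joinO_injective f.inj g.inj
  comm := fun x => Fin.ext (joinO_comm_val f g x)

lemma hom_ext_val {A B : AugFatDelta} {f g : A ⟶ B}
    (ht : ∀ x, ((f.top x : Fin B.m) : ℕ) = g.top x)
    (hb : ∀ x, ((f.bot x : Fin B.n) : ℕ) = g.bot x) : f = g :=
  Hom.ext' (OrderHom.ext _ _ (funext fun x => Fin.ext (ht x)))
    (OrderHom.ext _ _ (funext fun x => Fin.ext (hb x)))

lemma obj_ext {A B : AugFatDelta} (hm : A.m = B.m) (hn : A.n = B.n)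
    (h : ∀ (x : Fin A.m) (y : Fin B.m), (x : ℕ) = (y : ℕ) →
      ((A.hom x : Fin A.n) : ℕ) = (B.hom y : Fin B.n)) : A = B := by
  obtain ⟨m, n, f, s⟩ := A
  obtain ⟨m', n', f', s'⟩ := B
  dsimp at hm hn h
  subst hm; subst hn
  have : f = f' := OrderHom.ext _ _ (funext fun x => Fin.ext (h x x rfl))
  subst this
  rfl

lemma id_top_val (A : AugFatDelta) (x : Fin A.m) : (((𝟙 A : A ⟶ A).top x : Fin A.m) : ℕ) = x := rfl
lemma id_bot_val (A : AugFatDelta) (x : Fin A.n) : (((𝟙 A : A ⟶ A).bot x : Fin A.n) : ℕ) = x := rfl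

lemma comp_top {A B C : AugFatDelta} (f : A ⟶ B) (g : B ⟶ C) (x : Fin A.m) :
    (f ≫ g).top x = g.top (f.top x) := rfl
lemma comp_bot {A B C : AugFatDelta} (f : A ⟶ B) (g : B ⟶ C) (x : Fin A.n) :
    (f ≫ g).bot x = g.bot (f.bot x) := rfl

lemma eqToHom_top_val {A B : AugFatDelta} (h : A = B) (x : Fin A.m) :
    (((eqToHom h).top x : Fin B.m) : ℕ) = x := by subst h; rfl
lemma eqToHom_bot_val {A B : AugFatDelta} (h : A = B) (x : Fin A.n) :
    (((eqToHom h).bot x : Fin B.n) : ℕ) = x := by subst h; rfl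

lemma joinO_assoc_val {a b c a' b' c' : ℕ} (f : Fin a →o Fin a') (g : Fin b →o Fin b')
    (h : Fin c →o Fin c') (x : Fin (a + b + c)) (y : Fin (a + (b + c)))
    (hxy : (x : ℕ) = (y : ℕ)) :
    ((joinO (joinO f g) h x : Fin (a' + b' + c')) : ℕ) =
      ((joinO f (joinO g h) y : Fin (a' + (b' + c'))) : ℕ) := by
  have hx := x.isLt
  rw [joinO_val _ _ x x rfl (by omega), joinO_val _ _ y (y : ℕ) rfl (by omega)]
  by_cases h1 : (x : ℕ) < a
  · rw [dif_pos (show (x : ℕ) < a + b by omega), dif_pos (show (y : ℕ) < a by omega)]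
    rw [joinO_val _ _ _ (x : ℕ) (by simp) (by omega), dif_pos h1]
    exact oh_congr_val f (by simp [hxy])
  · by_cases h2 : (x : ℕ) < a + b
    · rw [dif_pos h2, dif_neg (show ¬ (y : ℕ) < a by omega)]
      rw [joinO_val _ _ _ (x : ℕ) (by simp) (by omega), dif_neg h1]
      rw [joinO_val _ _ _ ((y : ℕ) - a) (by simp) (by omega),
        dif_pos (show (y : ℕ) - a < b by omega)]
      have := oh_congr_val g
        (show ((⟨(x : ℕ) - a, by omega⟩ : Fin b) : ℕ) = (⟨(y : ℕ) - a, by omega⟩ : Fin b)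
          by simp; omega)
      omega
    · rw [dif_neg h2, dif_neg (show ¬ (y : ℕ) < a by omega)]
      rw [joinO_val _ _ _ ((y : ℕ) - a) (by simp) (by omega),
        dif_neg (show ¬ (y : ℕ) - a < b by omega)]
      have := oh_congr_val h
        (show ((⟨(x : ℕ) - (a + b), by omega⟩ : Fin c) : ℕ)
            = (⟨(y : ℕ) - a - b, by omega⟩ : Fin c) by simp; omega)
      omega

lemma joinO_unit_left_val {b d : ℕ} (g : Fin b →o Fin d) (e : Fin 0 →o Fin 0)
    (x : Fin (0 + b)) (y : Fin b) (hxy : (x : ℕ) = (y : ℕ)) :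
    ((joinO e g x : Fin (0 + d)) : ℕ) = ((g y : Fin d) : ℕ) := by
  have hx := x.isLt
  rw [joinO_val _ _ x x rfl (by omega), dif_neg (by omega)]
  rw [Nat.zero_add]
  exact oh_congr_val g (by simp; omega)

lemma joinO_unit_right_val {a c : ℕ} (f : Fin a →o Fin c) (e : Fin 0 →o Fin 0)
    (x : Fin (a + 0)) (y : Fin a) (hxy : (x : ℕ) = (y : ℕ)) :
    ((joinO f e x : Fin (c + 0)) : ℕ) = ((f y : Fin c) : ℕ) := by
  have hx := x.isLt
  rw [joinO_val _ _ x x rfl (by omega), dif_pos (by omega)]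
  exact oh_congr_val f (by simp [hxy])

lemma joinO_id_val {a b : ℕ} (x : Fin (a + b)) :
    ((joinO (OrderHom.id : Fin a →o Fin a) (OrderHom.id : Fin b →o Fin b) x : Fin (a + b)) : ℕ)
      = (x : ℕ) := by
  rw [joinO_val _ _ x x rfl x.isLt]
  split_ifs with h
  · rfl
  · show a + ((x : ℕ) - a) = (x : ℕ)
    have := x.isLt
    omega

lemma joinO_comp_val {a b a' b' a'' b'' : ℕ} (f : Fin a →o Fin a') (g : Fin a' →o Fin a'')
    (f' : Fin b →o Fin b') (g' : Fin b' →o Fin b'') (x : Fin (a + b)) :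
    ((joinO (g.comp f) (g'.comp f') x : Fin (a'' + b'')) : ℕ) =
      ((joinO g g' (joinO f f' x) : Fin (a'' + b'')) : ℕ) := by
  have hx := x.isLt
  by_cases h1 : (x : ℕ) < a
  · have e1 : ((joinO f f' x : Fin (a' + b')) : ℕ) = (f ⟨x, h1⟩ : ℕ) :=
      joinO_val_lt _ _ x rfl h1
    rw [joinO_val_lt (g.comp f) (g'.comp f') x rfl h1,
      joinO_val_lt g g' _ e1 (f ⟨x, h1⟩).isLt]
    simp only [Fin.eta, OrderHom.comp_coe, Function.comp_apply]
  · have e1 : ((joinO f f' x : Fin (a' + b')) : ℕ) =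
        a' + (f' ⟨(x : ℕ) - a, by omega⟩ : ℕ) :=
      joinO_val_ge _ _ x rfl h1 (by omega)
    have hb1 : a' + ((f' ⟨(x : ℕ) - a, by omega⟩ : Fin b') : ℕ) - a' < b' := by
      have := (f' ⟨(x : ℕ) - a, by omega⟩ : Fin b').isLt
      omega
    have hxa : (x : ℕ) - a < b := by omega
    rw [joinO_val_ge (g.comp f) (g'.comp f') x rfl h1 hxa]
    rw [joinO_val_ge g g' (joinO f f' x) e1 (by omega) hb1]
    simp only [Nat.add_sub_cancel_left, Fin.eta, OrderHom.comp_coe, Function.comp_apply]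

end AugFatDelta

/-- A strict monoidal structure on a category: a tensor product on objects and morphisms
which is functorial, together with *equalities* (rather than mere isomorphisms) of
objects witnessing associativity and unitality, compatible with the tensor product of
morphisms. -/
structure StrictMonoidalStructure (C : Type*) [Category C] where
  tensorObj : C → C → C
  tensorUnit : C
  tensorHom : ∀ {A B X Y : C}, (A ⟶ B) → (X ⟶ Y) → (tensorObj A X ⟶ tensorObj B Y)
  tensor_id : ∀ (A X : C), tensorHom (𝟙 A) (𝟙 X) = 𝟙 (tensorObj A X)
  tensor_comp : ∀ {A B C' X Y Z : C} (f : A ⟶ B) (g : B ⟶ C') (f' : X ⟶ Y) (g' : Y ⟶ Z),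
    tensorHom (f ≫ g) (f' ≫ g') = tensorHom f f' ≫ tensorHom g g'
  assoc : ∀ A B C' : C, tensorObj (tensorObj A B) C' = tensorObj A (tensorObj B C')
  unit_left : ∀ A : C, tensorObj tensorUnit A = A
  unit_right : ∀ A : C, tensorObj A tensorUnit = A
  assoc_hom : ∀ {A B C' X Y Z : C} (f : A ⟶ X) (g : B ⟶ Y) (h : C' ⟶ Z),
    tensorHom (tensorHom f g) h ≫ eqToHom (assoc X Y Z) =
      eqToHom (assoc A B C') ≫ tensorHom f (tensorHom g h)
  unit_left_hom : ∀ {A X : C} (f : A ⟶ X),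
    tensorHom (𝟙 tensorUnit) f ≫ eqToHom (unit_left X) = eqToHom (unit_left A) ≫ f
  unit_right_hom : ∀ {A X : C} (f : A ⟶ X),
    tensorHom f (𝟙 tensorUnit) ≫ eqToHom (unit_right X) = eqToHom (unit_right A) ≫ f

/-- The relative semiordinal sum `⊕` equips the augmented fat Delta category with a
strict monoidal structure whose unit is the empty epimorphism. -/
theorem augFatDelta_strictMonoidal :
    ∃ S : StrictMonoidalStructure AugFatDelta,
      (∀ A B : AugFatDelta, S.tensorObj A B = AugFatDelta.sumObj A B) ∧
      S.tensorUnit = AugFatDelta.emptyObj := by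
  refine ⟨{
    tensorObj := AugFatDelta.sumObj
    tensorUnit := AugFatDelta.emptyObj
    tensorHom := fun f g => AugFatDelta.sumHom f g
    tensor_id := ?_
    tensor_comp := ?_
    assoc := ?_
    unit_left := ?_
    unit_right := ?_
    assoc_hom := ?_
    unit_left_hom := ?_
    unit_right_hom := ?_ }, fun _ _ => rfl, rfl⟩
  · intro A X
    apply AugFatDelta.hom_ext_val
    · intro x
      exact AugFatDelta.joinO_id_val x
    · intro x
      exact AugFatDelta.joinO_id_val x
  · intro A B C' X Y Z f g f' g'
    apply AugFatDelta.hom_ext_val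
    · intro x
      exact AugFatDelta.joinO_comp_val f.top g.top f'.top g'.top x
    · intro x
      exact AugFatDelta.joinO_comp_val f.bot g.bot f'.bot g'.bot x
  · intro A B C'
    exact AugFatDelta.obj_ext (Nat.add_assoc _ _ _) (Nat.add_assoc _ _ _)
      (fun x y hxy => AugFatDelta.joinO_assoc_val A.hom B.hom C'.hom x y hxy)
  · intro A
    exact AugFatDelta.obj_ext (Nat.zero_add _) (Nat.zero_add _)
      (fun x y hxy => AugFatDelta.joinO_unit_left_val A.hom OrderHom.id x y hxy)
  · intro A
    exact AugFatDelta.obj_ext (Nat.add_zero _) (Nat.add_zero _)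
      (fun x y hxy => AugFatDelta.joinO_unit_right_val A.hom OrderHom.id x y hxy)
  · intro A B C' X Y Z f g h
    apply AugFatDelta.hom_ext_val
    · intro x
      rw [AugFatDelta.comp_top, AugFatDelta.comp_top, AugFatDelta.eqToHom_top_val]
      exact AugFatDelta.joinO_assoc_val f.top g.top h.top x _
        (AugFatDelta.eqToHom_top_val _ x).symm
    · intro x
      rw [AugFatDelta.comp_bot, AugFatDelta.comp_bot, AugFatDelta.eqToHom_bot_val]
      exact AugFatDelta.joinO_assoc_val f.bot g.bot h.bot x _
        (AugFatDelta.eqToHom_bot_val _ x).symm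
  · intro A X f
    apply AugFatDelta.hom_ext_val
    · intro x
      rw [AugFatDelta.comp_top, AugFatDelta.comp_top, AugFatDelta.eqToHom_top_val]
      exact AugFatDelta.joinO_unit_left_val f.top (OrderHom.id : Fin 0 →o Fin 0) x _
        (AugFatDelta.eqToHom_top_val _ x).symm
    · intro x
      rw [AugFatDelta.comp_bot, AugFatDelta.comp_bot, AugFatDelta.eqToHom_bot_val]
      exact AugFatDelta.joinO_unit_left_val f.bot (OrderHom.id : Fin 0 →o Fin 0) x _
        (AugFatDelta.eqToHom_bot_val _ x).symm
  · intro A X f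
    apply AugFatDelta.hom_ext_val
    · intro x
      rw [AugFatDelta.comp_top, AugFatDelta.comp_top, AugFatDelta.eqToHom_top_val]
      exact AugFatDelta.joinO_unit_right_val f.top (OrderHom.id : Fin 0 →o Fin 0) x _
        (AugFatDelta.eqToHom_top_val _ x).symm
    · intro x
      rw [AugFatDelta.comp_bot, AugFatDelta.comp_bot, AugFatDelta.eqToHom_bot_val]
      exact AugFatDelta.joinO_unit_right_val f.bot (OrderHom.id : Fin 0 →o Fin 0) x _
        (AugFatDelta.eqToHom_bot_val _ x).symm
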